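/- Let c ∈ ℂ, let C = max(6, √|Re(c)|) and let ε₀ = C²·(C−6)/4. Let 0 < ε < ε₀ and let x, y, z, t ∈ ℂ satisfy P(x,y,z,t) = 2·Re(c). Suppose the ε-relaxed fork conditions hold: ( |t| > |t − x·conj(y) + y·z| − ε or |t| > |t − x·conj(y) + conj(x·z)| − ε ) and ( |z| > |z − x·y + conj(x·t)| − ε or |z| > |z − x·y + conj(y)·t| − ε ). Then min(|x|, |y|) ≤ C. -/

import Mathlib

set_option maxHeartbeats 1000000

/-- The expression `P(x,y,z,t)` from the trace relation. -/
noncomputable def Pfun (x y z t : ℂ) : ℝ :=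
  ‖x‖ ^ 2 * ‖y‖ ^ 2 + ‖x‖ ^ 2 + ‖y‖ ^ 2 +
    ‖z‖ ^ 2 + ‖t‖ ^ 2 - 2 * (x * y * (starRingEnd ℂ) z).re -
    2 * ((starRingEnd ℂ) x * y * t).re - 3

private lemma key_real (C ε a b Z T u0 v0 p q : ℝ)
    (hC6 : 6 ≤ C) (hε : 0 < ε) (hεb : ε < C ^ 2 * (C - 6) / 4)
    (ha : C < a) (hb : C < b) (hpC : C < p) (hqC : C < q)
    (hZ : 0 ≤ Z) (hT : 0 ≤ T)
    (h1 : p * Z < 2 * T + ε + a * b) (h2 : q * T < 2 * Z + ε + a * b)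
    (hu : a * b - Z ≤ u0) (hv : a * b - T ≤ v0)
    (hid : u0 ^ 2 + v0 ^ 2 ≤ 2 * C ^ 2 + a ^ 2 * b ^ 2 - a ^ 2 - b ^ 2 + 3) : False := by
  have hC0 : (0:ℝ) < C := by linarith
  have ha0 : 0 < a := lt_trans hC0 ha
  have hb0 : 0 < b := lt_trans hC0 hb
  have hp0 : 0 < p := lt_trans hC0 hpC
  have hq0 : 0 < q := lt_trans hC0 hqC
  have hab : C^2 < a*b := by nlinarith
  have hab0 : 0 < a*b := by positivity
  have hεab : ε < a*b*(C-6)/4 := by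
    nlinarith [mul_nonneg (by nlinarith : (0:ℝ) ≤ a*b - C^2) (by linarith : (0:ℝ) ≤ C-6)]
  have hpq0 : 0 < p*q - 4 := by nlinarith
  have h3 : (p*q - 4) * T < (p+2) * (ε + a*b) := by
    nlinarith [mul_lt_mul_of_pos_left h2 hp0]
  have h3' : (p*q - 4) * Z < (q+2) * (ε + a*b) := by
    nlinarith [mul_lt_mul_of_pos_left h1 hq0]
  have hpq : (p+2)*(C-2) ≤ p*q - 4 := by
    nlinarith [mul_nonneg (le_of_lt hp0) (by linarith : (0:ℝ) ≤ q - C)]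
  have hpq' : (q+2)*(C-2) ≤ p*q - 4 := by
    nlinarith [mul_nonneg (le_of_lt hq0) (by linarith : (0:ℝ) ≤ p - C)]
  have h4 : (p+2) * (ε + a*b) ≤ (p*q - 4) * (a*b/4) := by
    nlinarith [mul_le_mul_of_nonneg_left (le_of_lt hεab) (by linarith : (0:ℝ) ≤ p+2),
      mul_le_mul_of_nonneg_right hpq (by positivity : (0:ℝ) ≤ a*b/4)]
  have h4' : (q+2) * (ε + a*b) ≤ (p*q - 4) * (a*b/4) := by
    nlinarith [mul_le_mul_of_nonneg_left (le_of_lt hεab) (by linarith : (0:ℝ) ≤ q+2),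
      mul_le_mul_of_nonneg_right hpq' (by positivity : (0:ℝ) ≤ a*b/4)]
  have hT4 : T < a*b/4 := lt_of_mul_lt_mul_left (lt_of_lt_of_le h3 h4) (le_of_lt hpq0)
  have hZ4 : Z < a*b/4 := lt_of_mul_lt_mul_left (lt_of_lt_of_le h3' h4') (le_of_lt hpq0)
  have hu4 : 3*(a*b)/4 < u0 := by linarith
  have hv4 : 3*(a*b)/4 < v0 := by linarith
  have h36 : (36:ℝ) ≤ C^2 := by nlinarith
  nlinarith [mul_pos (show (0:ℝ) < u0 - 3*(a*b)/4 by linarith) (show (0:ℝ) < u0 + 3*(a*b)/4 by linarith),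
    mul_pos (show (0:ℝ) < v0 - 3*(a*b)/4 by linarith) (show (0:ℝ) < v0 + 3*(a*b)/4 by linarith),
    mul_pos (show (0:ℝ) < a - C by linarith) (show (0:ℝ) < a + C by linarith),
    mul_pos (show (0:ℝ) < b - C by linarith) (show (0:ℝ) < b + C by linarith),
    mul_pos (show (0:ℝ) < a*b - 36 by nlinarith) (show (0:ℝ) < a*b + 36 by nlinarith)]

private lemma abs_sub_le' (A B : ℂ) : ‖A - B‖ ≤ ‖A‖ + ‖B‖ := by
  simpa [sub_eq_add_neg] using norm_add_le A (-B)

private lemma abs_ge_sub (A B : ℂ) : ‖A‖ - ‖B‖ ≤ ‖A - B‖ := by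
  have h := norm_add_le (A - B) B
  simp only [sub_add_cancel] at h
  linarith

theorem eps_fork_lemma (c : ℂ) (C ε₀ ε : ℝ)
    (hC : C = max 6 (Real.sqrt |c.re|)) (hε₀ : ε₀ = C ^ 2 * (C - 6) / 4)
    (hε : 0 < ε) (hεε₀ : ε < ε₀)
    (x y z t : ℂ) (hP : Pfun x y z t = 2 * c.re)
    (hfork_t : ‖(t - x * (starRingEnd ℂ) y + y * z)‖ - ε < ‖t‖ ∨
      ‖(t - x * (starRingEnd ℂ) y + (starRingEnd ℂ) (x * z))‖ - ε < ‖t‖)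
    (hfork_z : ‖(z - x * y + (starRingEnd ℂ) (x * t))‖ - ε < ‖z‖ ∨
      ‖(z - x * y + (starRingEnd ℂ) y * t)‖ - ε < ‖z‖) :
    min (‖x‖) (‖y‖) ≤ C := by
  by_contra hcon
  push_neg at hcon
  rw [lt_min_iff] at hcon
  obtain ⟨ha, hb⟩ := hcon
  have hC6 : 6 ≤ C := by rw [hC]; exact le_max_left _ _
  have hcre : c.re ≤ C ^ 2 := by
    have h1 : Real.sqrt |c.re| ≤ C := by rw [hC]; exact le_max_right _ _
    have h2 : |c.re| ≤ C ^ 2 := by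
      nlinarith [Real.sq_sqrt (abs_nonneg c.re), Real.sqrt_nonneg |c.re|]
    exact le_trans (le_abs_self _) h2
  set a := ‖x‖ with hadef
  set b := ‖y‖ with hbdef
  set Z := ‖z‖ with hZdef
  set T := ‖t‖ with hTdef
  have hZ0 : 0 ≤ Z := norm_nonneg z
  have hT0 : 0 ≤ T := norm_nonneg t
  -- the key identity
  have hid : (‖z - x * y‖) ^ 2 + (‖t - x * (starRingEnd ℂ) y‖) ^ 2
      = 2 * c.re + a ^ 2 * b ^ 2 - a ^ 2 - b ^ 2 + 3 := by
    unfold Pfun at hP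
    rw [hadef, hbdef]
    simp only [Complex.sq_norm, Complex.normSq_apply, Complex.mul_re, Complex.mul_im,
      Complex.sub_re, Complex.sub_im, Complex.conj_re, Complex.conj_im] at hP ⊢
    linear_combination hP
  -- lower bounds on the distances
  have habxy : ‖x * y‖ = a * b := norm_mul x y
  have habxy' : ‖x * (starRingEnd ℂ) y‖ = a * b := by
    rw [norm_mul, Complex.norm_conj]
  have hu : a * b - Z ≤ ‖z - x * y‖ := by
    have h := abs_ge_sub (x * y) z
    rw [habxy, norm_sub_rev] at h
    linarith
  have hv : a * b - T ≤ ‖t - x * (starRingEnd ℂ) y‖ := by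
    have h := abs_ge_sub (x * (starRingEnd ℂ) y) t
    rw [habxy', norm_sub_rev] at h
    linarith
  -- fork conditions give linear bounds
  have hforkT : ∃ p : ℝ, C < p ∧ p * Z < 2 * T + ε + a * b := by
    rcases hfork_t with h | h
    · refine ⟨b, hb, ?_⟩
      have e1 : ‖y * z‖
          ≤ ‖t - x * (starRingEnd ℂ) y + y * z‖
            + ‖t - x * (starRingEnd ℂ) y‖ := by
        have := abs_sub_le' (t - x * (starRingEnd ℂ) y + y * z) (t - x * (starRingEnd ℂ) y)
        simpa using this
      have e2 : ‖t - x * (starRingEnd ℂ) y‖ ≤ T + a * b := by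
        have := abs_sub_le' t (x * (starRingEnd ℂ) y)
        rw [habxy'] at this; linarith
      rw [norm_mul] at e1
      linarith
    · refine ⟨a, ha, ?_⟩
      have e1 : ‖(starRingEnd ℂ) (x * z)‖
          ≤ ‖t - x * (starRingEnd ℂ) y + (starRingEnd ℂ) (x * z)‖
            + ‖t - x * (starRingEnd ℂ) y‖ := by
        have := abs_sub_le' (t - x * (starRingEnd ℂ) y + (starRingEnd ℂ) (x * z))
          (t - x * (starRingEnd ℂ) y)
        simpa using this
      have e2 : ‖t - x * (starRingEnd ℂ) y‖ ≤ T + a * b := by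
        have := abs_sub_le' t (x * (starRingEnd ℂ) y)
        rw [habxy'] at this; linarith
      rw [Complex.norm_conj, norm_mul] at e1
      linarith
  have hforkZ : ∃ q : ℝ, C < q ∧ q * T < 2 * Z + ε + a * b := by
    rcases hfork_z with h | h
    · refine ⟨a, ha, ?_⟩
      have e1 : ‖(starRingEnd ℂ) (x * t)‖
          ≤ ‖z - x * y + (starRingEnd ℂ) (x * t)‖
            + ‖z - x * y‖ := by
        have := abs_sub_le' (z - x * y + (starRingEnd ℂ) (x * t)) (z - x * y)
        simpa using this
      have e2 : ‖z - x * y‖ ≤ Z + a * b := by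
        have := abs_sub_le' z (x * y)
        rw [habxy] at this; linarith
      rw [Complex.norm_conj, norm_mul] at e1
      linarith
    · refine ⟨b, hb, ?_⟩
      have e1 : ‖(starRingEnd ℂ) y * t‖
          ≤ ‖z - x * y + (starRingEnd ℂ) y * t‖
            + ‖z - x * y‖ := by
        have := abs_sub_le' (z - x * y + (starRingEnd ℂ) y * t) (z - x * y)
        simpa using this
      have e2 : ‖z - x * y‖ ≤ Z + a * b := by
        have := abs_sub_le' z (x * y)
        rw [habxy] at this; linarith
      rw [norm_mul, Complex.norm_conj] at e1
      linarith
  obtain ⟨p, hpC, h1⟩ := hforkT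
  obtain ⟨q, hqC, h2⟩ := hforkZ
  have hid' : (‖z - x * y‖) ^ 2 + (‖t - x * (starRingEnd ℂ) y‖) ^ 2
      ≤ 2 * C ^ 2 + a ^ 2 * b ^ 2 - a ^ 2 - b ^ 2 + 3 := by linarith
  exact key_real C ε a b Z T (‖z - x * y‖)
    (‖t - x * (starRingEnd ℂ) y‖) p q hC6 hε
    (by rw [hε₀] at hεε₀; exact hεε₀) ha hb hpC hqC hZ0 hT0 h1 h2 hu hv hid'
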